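/- Fix n ≥ 1 and Pauli letter assignments f, g : Fin n → {I,X,Y,Z}. For k ∈ Fin n let g_k denote the cyclically shifted assignment g_k(t) = g(t − k), subtraction taken modulo n. Then: (i) if supp(f) ∩ supp(g) = ∅, the Pauli strings commute, M_f · M_g = M_g · M_f; and (ii) the set {k ∈ Fin n : M_f · M_{g_k} ≠ M_{g_k} · M_f} has cardinality at most w_f · w_g. -/

import Mathlib

open Matrix

open Finset

/-- The four Pauli letters `I, X, Y, Z`. -/
inductive PauliLetter : Type
  | I | X | Y | Z
  deriving DecidableEq

instance : Fintype PauliLetter where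
  elems := {.I, .X, .Y, .Z}
  complete := fun x => by cases x <;> simp

/-- The 2×2 complex matrix associated to a Pauli letter. -/
def PauliLetter.toMatrix : PauliLetter → Matrix (Fin 2) (Fin 2) ℂ
  | .I => !![1, 0; 0, 1]
  | .X => !![0, 1; 1, 0]
  | .Y => !![0, -Complex.I; Complex.I, 0]
  | .Z => !![1, 0; 0, -1]

/-- The Pauli string associated to a Pauli letter assignment `f : Fin n → PauliLetter`,
given entrywise as the `n`-fold Kronecker product of the single-site matrices. -/
def pauliString {n : ℕ} (f : Fin n → PauliLetter) :
    Matrix (Fin n → Fin 2) (Fin n → Fin 2) ℂ :=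
  Matrix.of fun x y => ∏ t, (f t).toMatrix (x t) (y t)

/-- The support of a Pauli letter assignment: the set of sites carrying a non-identity letter. -/
def pauliSupport {n : ℕ} (f : Fin n → PauliLetter) : Finset (Fin n) :=
  univ.filter fun t => f t ≠ PauliLetter.I

lemma pauliString_mul_apply {n : ℕ} (f g : Fin n → PauliLetter) (x y : Fin n → Fin 2) :
    (pauliString f * pauliString g) x y
      = ∏ t, ((f t).toMatrix * (g t).toMatrix) (x t) (y t) := by
  simp only [pauliString, Matrix.mul_apply, Matrix.of_apply, ← Finset.prod_mul_distrib]
  rw [Finset.prod_univ_sum, Fintype.piFinset_univ]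

lemma pauliString_comm_of_disjoint {n : ℕ} (f g : Fin n → PauliLetter)
    (h : pauliSupport f ∩ pauliSupport g = ∅) :
    pauliString f * pauliString g = pauliString g * pauliString f := by
  ext x y
  rw [pauliString_mul_apply, pauliString_mul_apply]
  refine Finset.prod_congr rfl fun t _ => ?_
  have hI : f t = PauliLetter.I ∨ g t = PauliLetter.I := by
    by_contra hc
    push_neg at hc
    have ht : t ∈ pauliSupport f ∩ pauliSupport g := by
      simp [pauliSupport, hc.1, hc.2]
    rw [h] at ht
    exact absurd ht (Finset.notMem_empty t)
  rcases hI with h1 | h1 <;> rw [h1] <;>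
    simp [PauliLetter.toMatrix, ← Matrix.one_fin_two]

/-- (i) Pauli strings with disjoint supports commute, and (ii) for `g` cyclically shifted by
`k`, the set of shifts `k` for which `M_f` and `M_{g_k}` fail to commute has cardinality at most
`w_f · w_g`. -/
theorem pauliString_shift_commute {n : ℕ} (hn : 1 ≤ n) (f g : Fin n → PauliLetter) :
    (pauliSupport f ∩ pauliSupport g = ∅ →
      pauliString f * pauliString g = pauliString g * pauliString f) ∧
    {k : Fin n | pauliString f * pauliString (fun t => g (t - k)) ≠
        pauliString (fun t => g (t - k)) * pauliString f}.ncard ≤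
      (pauliSupport f).card * (pauliSupport g).card := by
  haveI : NeZero n := ⟨by omega⟩
  constructor
  · exact pauliString_comm_of_disjoint f g
  · set T : Finset (Fin n) :=
      (pauliSupport f ×ˢ pauliSupport g).image (fun p => p.1 - p.2) with hT
    have hsub : {k : Fin n | pauliString f * pauliString (fun t => g (t - k)) ≠
        pauliString (fun t => g (t - k)) * pauliString f} ⊆ ↑T := by
      intro k hk
      simp only [Set.mem_setOf_eq] at hk
      by_contra hkT
      apply hk
      apply pauliString_comm_of_disjoint
      rw [Finset.eq_empty_iff_forall_notMem]
      intro t ht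
      apply hkT
      rw [Finset.mem_inter] at ht
      have h1 : t ∈ pauliSupport f := ht.1
      have h2 : t - k ∈ pauliSupport g := by
        have := ht.2
        simpa [pauliSupport] using this
      have : k = t - (t - k) := by rw [sub_sub_cancel]
      rw [hT]
      simp only [Finset.coe_image, Set.mem_image, Finset.mem_coe, Finset.mem_product]
      exact ⟨(t, t - k), ⟨h1, h2⟩, this.symm⟩
    calc {k : Fin n | pauliString f * pauliString (fun t => g (t - k)) ≠
          pauliString (fun t => g (t - k)) * pauliString f}.ncard
        ≤ (↑T : Set (Fin n)).ncard := Set.ncard_le_ncard hsub T.finite_toSet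
      _ = T.card := Set.ncard_coe_finset T
      _ ≤ (pauliSupport f ×ˢ pauliSupport g).card := Finset.card_image_le
      _ = (pauliSupport f).card * (pauliSupport g).card := Finset.card_product _ _
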